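/- Let M ≥ 2, d ≥ 2, let A = (A_1,…,A_M) be an irreducible tuple of d×d real matrices, let s > 0, and let μ be a σ-invariant Borel probability measure on Σ_M satisfying the Gibbs inequality for (A,s) with some constants C > 0 and P ∈ ℝ. Suppose there exist integers n, r ≥ 1 with nr = d, symbols ω_1,…,ω_n ∈ {1,…,M}, and linear subspaces R_1,…,R_n of ℝ^d, each of dimension r, such that ℝ^d is the internal direct sum R_1 ⊕ ⋯ ⊕ R_n, A_i R_j = {0} whenever i ≠ ω_j, A_{ω_j} R_j = R_{j+1} for 1 ≤ j < n and A_{ω_n} R_n = R_1, for each i = 1,…,n the product A_{ω_{i−1}}⋯A_{ω_1}A_{ω_n}⋯A_{ω_i} maps R_i bijectively onto itself, and A_{x_n}⋯A_{x_1} ≠ 0 if and only if (x_1,…,x_n) is a cyclic permutation of (ω_1,…,ω_n). Then μ is supported on a periodic orbit: for the point z ∈ Σ_M defined by z_{qn+r} = ω_r (for all q ≥ 0 and 1 ≤ r ≤ n) one has σ^n z = z and the topological support of μ is contained in {z, σz, …, σ^{n−1}z}. -/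

import Mathlib

open MeasureTheory Filter Topology

open Fin.NatCast

/-- The operator norm on square real matrices induced by the Euclidean norm. -/
noncomputable def opNorm {n : Type*} [Fintype n] [DecidableEq n]
    (X : Matrix n n ℝ) : ℝ :=
  ‖Matrix.toEuclideanCLM (𝕜 := ℝ) X‖

/-- The spectral radius `ρ(X) = inf_{k ≥ 1} ‖X^k‖^(1/k)` (Gelfand). -/
noncomputable def specRad {n : Type*} [Fintype n] [DecidableEq n]
    (X : Matrix n n ℝ) : ℝ :=
  ⨅ k : ℕ, opNorm (X ^ (k + 1)) ^ ((1 : ℝ) / (k + 1))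

/-- The product `A_{x_n} ⋯ A_{x_1}` associated to the word `x = (x_1, …, x_n)`. -/
noncomputable def wordProd {M d n : ℕ} (A : Fin M → Matrix (Fin d) (Fin d) ℝ)
    (x : Fin n → Fin M) : Matrix (Fin d) (Fin d) ℝ :=
  (List.ofFn (fun i => A (x i))).reverse.prod

/-- The product `A_{x_n} ⋯ A_{x_1}` associated to the word `w = [x_1, …, x_n]`. -/
noncomputable def listProd {M d : ℕ} (A : Fin M → Matrix (Fin d) (Fin d) ℝ)
    (w : List (Fin M)) : Matrix (Fin d) (Fin d) ℝ :=
  ((w.map A).reverse).prod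

/-- Irreducibility: no invariant subspace `U` with `0 < dim U < d`. -/
def IsIrredTuple {M d : ℕ} (A : Fin M → Matrix (Fin d) (Fin d) ℝ) : Prop :=
  ¬ ∃ U : Submodule ℝ (Fin d → ℝ),
      (∀ i, U.map (A i).mulVecLin ≤ U) ∧ U ≠ ⊥ ∧ U ≠ ⊤

/-- The shift map on `Σ_M = {1,…,M}^ℕ`. -/
def shift {M : ℕ} : (ℕ → Fin M) → (ℕ → Fin M) := fun x n => x (n + 1)

/-- The cylinder set `[x_1 ⋯ x_n]` determined by the word `w = [x_1, …, x_n]`. -/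
def cyl {M : ℕ} (w : List (Fin M)) : Set (ℕ → Fin M) :=
  {y | ∀ i : Fin w.length, y (i : ℕ) = w.get i}

/-- The Gibbs inequality for `(A, s)` with constants `C > 0`, `P ∈ ℝ`. -/
def IsGibbs {M d : ℕ} (A : Fin M → Matrix (Fin d) (Fin d) ℝ) (s C P : ℝ)
    (μ : Measure (ℕ → Fin M)) : Prop :=
  ∀ w : List (Fin M), w ≠ [] →
    C⁻¹ * (μ (cyl w)).toReal ≤ Real.exp (-(w.length : ℝ) * P) * opNorm (listProd A w) ^ s ∧
    Real.exp (-(w.length : ℝ) * P) * opNorm (listProd A w) ^ s ≤ C * (μ (cyl w)).toReal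

/-- The pressure `P(A,s) = inf_{n ≥ 1} (1/n) log Σ_{|x| = n} ‖A_{x_n} ⋯ A_{x_1}‖^s ∈ [-∞, ∞)`,
with the convention that a term is `-∞` when the corresponding sum vanishes. -/
noncomputable def pressure {M d : ℕ} (A : Fin M → Matrix (Fin d) (Fin d) ℝ) (s : ℝ) : EReal :=
  ⨅ n : ℕ,
    if (∑ x : Fin (n + 1) → Fin M, opNorm (wordProd A x) ^ s) = 0 then (⊥ : EReal)
    else ((Real.log (∑ x : Fin (n + 1) → Fin M, opNorm (wordProd A x) ^ s) / (n + 1) : ℝ) : EReal)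


lemma rot_agree {n : ℕ} [NeZero n] {α : Type*} (f : Fin n → α) (t m₀ : Fin n)
    (h : ∀ j : Fin n, j ≠ m₀ → f (j + t) = f j) : f (m₀ + t) = f m₀ := by
  rcases eq_or_ne t 0 with rfl | ht
  · simp
  · have key : ∀ l : ℕ, 0 < l → l ≤ addOrderOf t → f (m₀ + l • t) = f (m₀ + t) := by
      intro l
      induction l with
      | zero => omega
      | succ l ih =>
        intro _ hle
        rcases Nat.eq_zero_or_pos l with rfl | hl
        · simp
        · have h1 : l • t ≠ 0 := by
            intro h0
            have := addOrderOf_le_of_nsmul_eq_zero hl h0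
            omega
          have h2 : m₀ + l • t ≠ m₀ := by
            intro he
            have he' : m₀ + l • t = m₀ + 0 := by rw [add_zero]; exact he
            exact h1 (add_left_cancel he')
          calc f (m₀ + (l + 1) • t) = f ((m₀ + l • t) + t) := by
                rw [succ_nsmul, add_assoc]
            _ = f (m₀ + l • t) := h _ h2
            _ = f (m₀ + t) := ih hl (le_trans (Nat.le_succ l) hle)
    have hpos : 0 < addOrderOf t := addOrderOf_pos t
    have := key (addOrderOf t) hpos le_rfl
    rw [addOrderOf_nsmul_eq_zero, add_zero] at this
    exact this.symm

lemma measurableSet_cyl {M : ℕ} (w : List (Fin M)) : MeasurableSet (cyl w) := by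
  have : cyl w = ⋂ i : Fin w.length, (fun y : ℕ → Fin M => y (i : ℕ)) ⁻¹' {w.get i} := by
    ext y; simp [cyl, Set.mem_iInter]
  rw [this]
  exact MeasurableSet.iInter fun i => (measurable_pi_apply _) (measurableSet_singleton _)

lemma mem_cyl_ofFn {M n : ℕ} (w : Fin n → Fin M) (y : ℕ → Fin M) :
    y ∈ cyl (List.ofFn w) ↔ ∀ j : Fin n, y (j : ℕ) = w j := by
  constructor
  · intro h j
    have := h (Fin.cast (List.length_ofFn (f := w)).symm j)
    simpa [List.get_ofFn] using this
  · intro h i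
    have := h (Fin.cast (List.length_ofFn (f := w)) i)
    simpa [List.get_ofFn, Fin.cast] using this

lemma listProd_ofFn {M d n : ℕ} (A : Fin M → Matrix (Fin d) (Fin d) ℝ) (w : Fin n → Fin M) :
    listProd A (List.ofFn w) = wordProd A w := by
  simp [listProd, wordProd, List.map_ofFn, Function.comp_def]

lemma shift_iterate {M : ℕ} (m : ℕ) (x : ℕ → Fin M) (q : ℕ) : shift^[m] x q = x (q + m) := by
  induction m generalizing x q with
  | zero => rfl
  | succ m ih =>
    rw [Function.iterate_succ_apply, ih]
    simp [shift, Nat.add_assoc]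

lemma gibbs_null {M d : ℕ} {A : Fin M → Matrix (Fin d) (Fin d) ℝ} {s C P : ℝ}
    (hs : 0 < s) (hC : 0 < C) {μ : Measure (ℕ → Fin M)} [IsProbabilityMeasure μ]
    (hG : IsGibbs A s C P μ) (w : List (Fin M)) (hw : w ≠ []) (h0 : listProd A w = 0) :
    μ (cyl w) = 0 := by
  have h := (hG w hw).1
  rw [h0] at h
  have hop : opNorm (0 : Matrix (Fin d) (Fin d) ℝ) = 0 := by rw [opNorm, map_zero, norm_zero]
  rw [hop, Real.zero_rpow hs.ne', mul_zero] at h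
  have h1 : (μ (cyl w)).toReal ≤ 0 := by
    have hCinv : (0:ℝ) < C⁻¹ := inv_pos.mpr hC
    nlinarith [ENNReal.toReal_nonneg (a := μ (cyl w))]
  have h2 : (μ (cyl w)).toReal = 0 := le_antisymm h1 ENNReal.toReal_nonneg
  rcases (ENNReal.toReal_eq_zero_iff _).mp h2 with h | h
  · exact h
  · exact absurd h (measure_ne_top μ _)

example {M : ℕ} (hinv : MeasurePreserving (shift (M := M)) (0:Measure _) 0) (k : ℕ)
    (s : Set (ℕ → Fin M)) (hs : MeasurableSet s) : True := by
  have := (hinv.iterate k).measure_preimage hs.nullMeasurableSet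
  trivial

/-- under the degenerate algebraic condition (iii) of Theorem 3.1, the Gibbs
measure is supported on the periodic orbit of `z = (ω_1 ω_2 ⋯ ω_n)^∞`. -/
theorem stmt_8 {M d : ℕ} (hM : 2 ≤ M) (hd : 2 ≤ d)
    (A : Fin M → Matrix (Fin d) (Fin d) ℝ) (hA : IsIrredTuple A)
    (s : ℝ) (hs : 0 < s)
    (μ : Measure (ℕ → Fin M)) [IsProbabilityMeasure μ]
    (hinv : MeasurePreserving (shift (M := M)) μ μ)
    (C P : ℝ) (hC : 0 < C) (hG : IsGibbs A s C P μ)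
    (n r : ℕ) [NeZero n] (hr : 0 < r) (hnr : n * r = d)
    (ω : Fin n → Fin M) (R : Fin n → Submodule ℝ (Fin d → ℝ))
    (hdim : ∀ j, Module.finrank ℝ (R j) = r)
    (hsum : DirectSum.IsInternal R)
    (hzero : ∀ (i : Fin M) (j : Fin n), i ≠ ω j → (R j).map (A i).mulVecLin = ⊥)
    (hcyc : ∀ j : Fin n, (R j).map (A (ω j)).mulVecLin = R (j + 1))
    (hbij : ∀ i : Fin n,
      Set.BijOn (fun v => (wordProd A (fun k : Fin n => ω (i + k))).mulVec v)
        (R i : Set (Fin d → ℝ)) (R i : Set (Fin d → ℝ)))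
    (hne : ∀ x : Fin n → Fin M,
      wordProd A x ≠ 0 ↔ ∃ i : Fin n, ∀ k : Fin n, x k = ω (i + k)) :
    ∀ z : ℕ → Fin M, (∀ q : ℕ, z q = ω ⟨q % n, Nat.mod_lt q (Nat.pos_of_ne_zero (NeZero.ne n))⟩) →
      shift^[n] z = z ∧
      ∀ U : Set (ℕ → Fin M), IsOpen U →
        Disjoint U {y | ∃ i < n, y = shift^[i] z} → μ U = 0 := by
  intro z hz
  have hn : 0 < n := Nat.pos_of_ne_zero (NeZero.ne n)
  constructor
  · funext q
    rw [shift_iterate, hz, hz]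
    congr 1
    exact Fin.ext (by simp)
  · intro U _hU hdisj
    set Bad : Set (ℕ → Fin M) :=
      ⋃ k : ℕ, ⋃ w : Fin n → Fin M,
        ⋃ _ : ¬ ∃ i : Fin n, ∀ j : Fin n, w j = ω (i + j),
          shift^[k] ⁻¹' cyl (List.ofFn w) with hBadDef
    have hBad0 : μ Bad = 0 := by
      rw [hBadDef]
      refine measure_iUnion_null fun k => measure_iUnion_null fun w =>
        measure_iUnion_null fun hw => ?_
      have hprod : wordProd A w = 0 := by
        by_contra h; exact hw ((hne w).mp h)
      have hcylnull : μ (cyl (List.ofFn w)) = 0 := by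
        refine gibbs_null hs hC hG _ ?_ (by rw [listProd_ofFn]; exact hprod)
        intro h
        have := congrArg List.length h
        simp at this
        omega
      rw [(hinv.iterate k).measure_preimage (measurableSet_cyl _).nullMeasurableSet]
      exact hcylnull
    have horbit : ∀ y, y ∉ Bad → ∃ i < n, y = shift^[i] z := by
      intro y hy
      simp only [hBadDef, Set.mem_iUnion, not_exists] at hy
      have window : ∀ k : ℕ, ∃ i : Fin n, ∀ j : Fin n, y (k + (j : ℕ)) = ω (i + j) := by
        intro k
        by_contra hcon
        refine hy k (fun j => y (k + (j : ℕ))) (fun i hfor => hcon ⟨i, hfor⟩) ?_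
        rw [Set.mem_preimage, mem_cyl_ofFn]
        intro j
        rw [shift_iterate, Nat.add_comm]
      obtain ⟨i₀, hi₀⟩ := window 0
      have main : ∀ q : ℕ, y q = ω (i₀ + (q : Fin n)) := by
        intro q
        induction q using Nat.strong_induction_on with
        | _ q ih =>
        rcases lt_or_ge q n with hq | hq
        · have h1 := hi₀ ⟨q, hq⟩
          simp only [Nat.zero_add] at h1
          rw [h1]
          congr 2
          exact Fin.ext (by simp [Fin.val_natCast, Nat.mod_eq_of_lt hq])
        · set k := q - n + 1 with hk
          obtain ⟨i, hi⟩ := window k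
          set last : Fin n := ⟨n - 1, by omega⟩ with hlast
          have hlv : (last : ℕ) = n - 1 := rfl
          have hstep : ∀ j : Fin n, j ≠ last → ω (i + j) = ω (i₀ + (k : Fin n) + j) := by
            intro j hj
            have hjn : (j : ℕ) < n := j.isLt
            have hjv : (j : ℕ) < n - 1 := by
              rcases lt_or_ge (j : ℕ) (n - 1) with h | h
              · exact h
              · exact absurd (Fin.ext (by rw [hlv]; omega : (j : ℕ) = (last : ℕ))) hj
            have hlt : k + (j : ℕ) < q := by omega
            have h2 := ih (k + (j : ℕ)) hlt
            rw [hi j] at h2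
            rw [h2]
            congr 1
            rw [Nat.cast_add, Fin.cast_val_eq_self, add_assoc]
          have hrot := rot_agree ω (i₀ + (k : Fin n) - i) (i + last) (by
            intro x hx
            have hxj : x - i ≠ last := by
              intro hxe
              apply hx
              rw [← hxe]
              abel
            calc ω (x + (i₀ + (k : Fin n) - i)) = ω (i₀ + (k : Fin n) + (x - i)) := by
                  congr 1; abel
              _ = ω (i + (x - i)) := (hstep (x - i) hxj).symm
              _ = ω x := by congr 1; abel)
          have hql : q = k + (n - 1) := by omega
          have hql' : q = k + (last : ℕ) := by rw [hlv]; omega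
          have hcast : (q : Fin n) = (k : Fin n) + last := by
            apply Fin.ext
            simp only [Fin.val_natCast, Fin.add_def]
            rw [hql', Nat.add_mod, Nat.mod_eq_of_lt last.isLt]
          calc y q = ω (i + last) := by rw [hql']; exact hi last
            _ = ω (i₀ + (k : Fin n) + last) := by
                rw [← hrot]
                congr 1
                abel
            _ = ω (i₀ + (q : Fin n)) := by rw [hcast, add_assoc]
      refine ⟨(i₀ : ℕ), i₀.isLt, ?_⟩
      funext q
      rw [shift_iterate, hz, main q]
      congr 1
      apply Fin.ext
      simp only [Fin.add_def, Fin.val_natCast]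
      calc ((i₀ : ℕ) + q % n) % n = ((i₀ : ℕ) % n + q % n) % n := by
            rw [Nat.mod_eq_of_lt i₀.isLt]
        _ = ((i₀ : ℕ) + q) % n := (Nat.add_mod _ _ _).symm
        _ = (q + (i₀ : ℕ)) % n := by rw [Nat.add_comm]
    have hsub : U ⊆ Bad := by
      intro y hyU
      by_contra hyB
      exact (Set.disjoint_left.mp hdisj hyU) (horbit y hyB)
    exact measure_mono_null hsub hBad0
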